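/- If v is a vertex of degree at least 2 in a graph G, then (γ_sp(G−v) + γ_sp(G/v) − ⌊deg(v)/2⌋ + 1)/2 ≤ γ_sp(G) ≤ (γ_sp(G−v) + γ_sp(G/v))/2 + 1. -/

import Mathlib

open SimpleGraph

/-- A super dominating set: a dominating set `S` such that every vertex `u ∉ S`
has a private "super" dominator `v ∈ S` with `N(v) ∩ (V \ S) = {u}`. -/
def IsSuperDominatingSet {V : Type*} (G : SimpleGraph V) (S : Finset V) : Prop :=
  (∀ u ∉ S, ∃ v ∈ S, G.Adj v u) ∧
  (∀ u ∉ S, ∃ v ∈ S, ∀ w, (G.Adj v w ∧ w ∉ S) ↔ w = u)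

/-- The super domination number: minimum size of a super dominating set. -/
noncomputable def superDominationNumber {V : Type*} (G : SimpleGraph V) : ℕ :=
  sInf {n | ∃ S : Finset V, IsSuperDominatingSet G S ∧ S.card = n}

/-- Edge contraction of the edge `uv`: `v` is deleted and `u` plays the role of the merged
vertex, adjacent to all former neighbours of `u` or `v`. -/
def contractEdge {V : Type*} (G : SimpleGraph V) (u v : V) : SimpleGraph {x : V // x ≠ v} :=
  SimpleGraph.fromRel (fun a b => G.Adj a.val b.val ∨ (a.val = u ∧ G.Adj v b.val))

/-- Vertex deletion. -/
def deleteVertex {V : Type*} (G : SimpleGraph V) (v : V) : SimpleGraph {x : V // x ≠ v} :=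
  G.induce {x : V | x ≠ v}

/-- Vertex contraction: delete `v` and make its open neighbourhood a clique. -/
def contractVertex {V : Type*} (G : SimpleGraph V) (v : V) : SimpleGraph {x : V // x ≠ v} :=
  SimpleGraph.fromRel (fun a b => G.Adj a.val b.val ∨ (G.Adj v a.val ∧ G.Adj v b.val))

open Finset
lemma isSDS_of_witness {V : Type*} {G : SimpleGraph V} {S : Finset V}
    (h2 : ∀ u ∉ S, ∃ v ∈ S, ∀ w, (G.Adj v w ∧ w ∉ S) ↔ w = u) :
    IsSuperDominatingSet G S := by
  refine ⟨fun u hu => ?_, h2⟩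
  obtain ⟨w, hwS, hw⟩ := h2 u hu
  exact ⟨w, hwS, ((hw u).mpr rfl).1⟩

lemma sds_univ {V : Type*} [Fintype V] (G : SimpleGraph V) :
    IsSuperDominatingSet G Finset.univ :=
  ⟨fun u hu => absurd (mem_univ u) hu, fun u hu => absurd (mem_univ u) hu⟩

lemma sdn_le {V : Type*} {G : SimpleGraph V} {S : Finset V} (h : IsSuperDominatingSet G S) :
    superDominationNumber G ≤ S.card :=
  Nat.sInf_le ⟨S, h, rfl⟩

lemma exists_min_sds {V : Type*} [Fintype V] (G : SimpleGraph V) :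
    ∃ S : Finset V, IsSuperDominatingSet G S ∧ S.card = superDominationNumber G :=
  Nat.sInf_mem (⟨Finset.univ.card, Finset.univ, sds_univ G, rfl⟩ :
    {n | ∃ S : Finset V, IsSuperDominatingSet G S ∧ S.card = n}.Nonempty)

/-- witness function -/

lemma exists_witness_fun {V : Type*} {G : SimpleGraph V} {S : Finset V}
    (h : IsSuperDominatingSet G S) :
    ∃ w : V → V, ∀ u ∉ S, w u ∈ S ∧ ∀ x, (G.Adj (w u) x ∧ x ∉ S) ↔ x = u := by
  have : ∀ u : V, ∃ y : V, u ∉ S → y ∈ S ∧ ∀ x, (G.Adj y x ∧ x ∉ S) ↔ x = u := by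
    intro u
    by_cases hu : u ∈ S
    · exact ⟨u, fun h' => absurd hu h'⟩
    · obtain ⟨y, hyS, hy⟩ := h.2 u hu
      exact ⟨y, fun _ => ⟨hyS, hy⟩⟩
  obtain ⟨w, hw⟩ := Classical.axiomOfChoice this
  exact ⟨w, fun u hu => hw u hu⟩

lemma contractVertex_adj {V : Type*} (G : SimpleGraph V) (v : V) (a b : {x : V // x ≠ v}) :
    (contractVertex G v).Adj a b ↔ (a : V) ≠ b ∧ (G.Adj a b ∨ (G.Adj v a ∧ G.Adj v b)) := by
  simp only [contractVertex, fromRel_adj, ne_eq, Subtype.ext_iff]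
  constructor
  · rintro ⟨h, (h'|⟨h1,h2⟩)|(h'|⟨h1,h2⟩)⟩
    · exact ⟨h, Or.inl h'⟩
    · exact ⟨h, Or.inr ⟨h1, h2⟩⟩
    · exact ⟨h, Or.inl h'.symm⟩
    · exact ⟨h, Or.inr ⟨h2, h1⟩⟩
  · rintro ⟨h, h'⟩; exact ⟨h, Or.inl h'⟩

lemma deleteVertex_adj {V : Type*} (G : SimpleGraph V) (v : V) (a b : {x : V // x ≠ v}) :
    (deleteVertex G v).Adj a b ↔ G.Adj a b := by
  simp [deleteVertex]

lemma gamma_le_del {V : Type*} [Fintype V] (G : SimpleGraph V) (v : V) :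
    superDominationNumber G ≤ superDominationNumber (deleteVertex G v) + 1 := by
  classical
  obtain ⟨T, hT, hTcard⟩ := exists_min_sds (deleteVertex G v)
  set S' : Finset V := T.map ⟨Subtype.val, Subtype.val_injective⟩ ∪ {v} with hS'
  have hmem : ∀ x : {x : V // x ≠ v}, (x : V) ∈ S' ↔ x ∈ T := by
    intro x
    simp only [hS', mem_union, mem_map, Function.Embedding.coeFn_mk, mem_singleton]
    constructor
    · rintro (⟨y, hy, hxy⟩ | hx)
      · rwa [← Subtype.ext hxy.symm] at hy
      · exact absurd hx x.2
    · intro hx; exact Or.inl ⟨x, hx, rfl⟩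
  have hsds : IsSuperDominatingSet G S' := by
    apply isSDS_of_witness
    intro u hu
    have huv : u ≠ v := fun h => hu (by simp [hS', h])
    have huT : (⟨u, huv⟩ : {x : V // x ≠ v}) ∉ T := fun h => hu ((hmem ⟨u, huv⟩).mpr h)
    obtain ⟨w, hwT, hw⟩ := hT.2 ⟨u, huv⟩ huT
    refine ⟨(w : V), (hmem w).mpr hwT, fun x => ?_⟩
    constructor
    · rintro ⟨hadj, hx⟩
      have hxv : x ≠ v := fun h => hx (by simp [hS', h])
      have := (hw ⟨x, hxv⟩).mp ⟨(deleteVertex_adj G v w ⟨x, hxv⟩).mpr hadj,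
        fun h => hx ((hmem ⟨x, hxv⟩).mpr h)⟩
      exact congrArg Subtype.val this
    · rintro rfl
      exact ⟨(deleteVertex_adj G v w ⟨_, huv⟩).mp ((hw ⟨_, huv⟩).mpr rfl).1, hu⟩
  calc superDominationNumber G ≤ S'.card := sdn_le hsds
    _ ≤ T.card + 1 := by
        refine (card_union_le _ _).trans ?_
        simp
    _ = _ := by rw [hTcard]

lemma gamma_le_con {V : Type*} [Fintype V] (G : SimpleGraph V) (v : V) :
    superDominationNumber G ≤ superDominationNumber (contractVertex G v) + 1 := by
  classical
  obtain ⟨T, hT, hTcard⟩ := exists_min_sds (contractVertex G v)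
  set S' : Finset V := T.map ⟨Subtype.val, Subtype.val_injective⟩ ∪ {v} with hS'
  have hmem : ∀ x : {x : V // x ≠ v}, (x : V) ∈ S' ↔ x ∈ T := by
    intro x
    simp only [hS', mem_union, mem_map, Function.Embedding.coeFn_mk, mem_singleton]
    constructor
    · rintro (⟨y, hy, hxy⟩ | hx)
      · rwa [← Subtype.ext hxy.symm] at hy
      · exact absurd hx x.2
    · intro hx; exact Or.inl ⟨x, hx, rfl⟩
  have hvS' : v ∈ S' := by simp [hS']
  have hsds : IsSuperDominatingSet G S' := by
    apply isSDS_of_witness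
    intro u hu
    have huv : u ≠ v := fun h => hu (by simp [hS', h])
    have huT : (⟨u, huv⟩ : {x : V // x ≠ v}) ∉ T := fun h => hu ((hmem ⟨u, huv⟩).mpr h)
    obtain ⟨w, hwT, hw⟩ := hT.2 ⟨u, huv⟩ huT
    by_cases hadj : G.Adj (w : V) u
    · refine ⟨(w : V), (hmem w).mpr hwT, fun x => ?_⟩
      constructor
      · rintro ⟨hadj', hx⟩
        have hxv : x ≠ v := fun h => hx (by simp [hS', h])
        have hcadj : (contractVertex G v).Adj w ⟨x, hxv⟩ :=
          (contractVertex_adj G v w ⟨x, hxv⟩).mpr ⟨hadj'.ne, Or.inl hadj'⟩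
        have := (hw ⟨x, hxv⟩).mp ⟨hcadj, fun h => hx ((hmem ⟨x, hxv⟩).mpr h)⟩
        exact congrArg Subtype.val this
      · rintro rfl; exact ⟨hadj, hu⟩
    · have hcu : (contractVertex G v).Adj w ⟨u, huv⟩ := ((hw ⟨u, huv⟩).mpr rfl).1
      obtain ⟨hne, hor⟩ := (contractVertex_adj G v w ⟨u, huv⟩).mp hcu
      have hvw : G.Adj v (w : V) ∧ G.Adj v u := by
        rcases hor with h | h
        · exact absurd h hadj
        · exact h
      refine ⟨v, hvS', fun x => ?_⟩
      constructor
      · rintro ⟨hadj', hx⟩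
        have hxv : x ≠ v := hadj'.ne'
        have hxw : (w : V) ≠ x := by
          rintro rfl; exact hx ((hmem w).mpr hwT)
        have hcadj : (contractVertex G v).Adj w ⟨x, hxv⟩ :=
          (contractVertex_adj G v w ⟨x, hxv⟩).mpr ⟨hxw, Or.inr ⟨hvw.1, hadj'⟩⟩
        have := (hw ⟨x, hxv⟩).mp ⟨hcadj, fun h => hx ((hmem ⟨x, hxv⟩).mpr h)⟩
        exact congrArg Subtype.val this
      · rintro rfl; exact ⟨hvw.2, hu⟩
  calc superDominationNumber G ≤ S'.card := sdn_le hsds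
    _ ≤ T.card + 1 := by
        refine (card_union_le _ _).trans ?_
        simp
    _ = _ := by rw [hTcard]

lemma del_le_gamma {V : Type*} [Fintype V] (G : SimpleGraph V) (v : V) :
    superDominationNumber (deleteVertex G v) ≤ superDominationNumber G := by
  classical
  obtain ⟨S, hS, hScard⟩ := exists_min_sds G
  obtain ⟨w, hw⟩ := exists_witness_fun hS
  set D0 : Finset V := univ.filter (fun u => u ∉ S ∧ w u = v) with hD0
  have hD0card : D0.card ≤ 1 := by
    apply card_le_one.mpr
    intro a ha b hb
    simp only [hD0, mem_filter] at ha hb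
    have hadjb : G.Adj v b := by
      have := ((hw b hb.2.1).2 b).mpr rfl
      rw [hb.2.2] at this; exact this.1
    have := ((hw a ha.2.1).2 b).mp ⟨by rw [ha.2.2]; exact hadjb, hb.2.1⟩
    exact this.symm
  set S' : Finset V := S.erase v ∪ D0 with hS'
  have hS'v : ∀ x ∈ S', x ≠ v := by
    intro x hx
    simp only [hS', mem_union, mem_erase, hD0, mem_filter] at hx
    rcases hx with ⟨h, _⟩ | ⟨_, h, hwx⟩
    · exact h
    · rintro rfl
      exact h (hwx ▸ (hw _ h).1)
  have hS'card : S'.card ≤ superDominationNumber G := by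
    rw [← hScard]
    by_cases hvS : v ∈ S
    · have h1 : (S.erase v).card = S.card - 1 := card_erase_of_mem hvS
      have h2 : 1 ≤ S.card := card_pos.mpr ⟨v, hvS⟩
      calc S'.card ≤ (S.erase v).card + D0.card := card_union_le _ _
        _ ≤ (S.card - 1) + 1 := by rw [h1]; exact Nat.add_le_add_left hD0card _
        _ = S.card := by omega
    · have hD0e : D0 = ∅ := by
        apply eq_empty_of_forall_notMem
        intro u hu
        simp only [hD0, mem_filter] at hu
        exact hvS (hu.2.2 ▸ (hw u hu.2.1).1)
      have : S' = S := by rw [hS', hD0e, union_empty, erase_eq_of_notMem hvS]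
      rw [this]
  set T : Finset {x : V // x ≠ v} := S'.subtype (· ≠ v) with hT
  have hTmem : ∀ x : {x : V // x ≠ v}, x ∈ T ↔ (x : V) ∈ S' := by
    intro x; simp [hT]
  have hTcard : T.card = S'.card := by
    rw [hT, card_subtype, filter_true_of_mem hS'v]
  have hsds : IsSuperDominatingSet (deleteVertex G v) T := by
    apply isSDS_of_witness
    rintro ⟨u, huv⟩ hu
    rw [hTmem] at hu
    have huS : u ∉ S := fun h => hu (by
      simp only [hS', mem_union, mem_erase]; exact Or.inl ⟨huv, h⟩)
    have hwuv : w u ≠ v := by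
      intro h
      exact hu (by simp only [hS', mem_union, hD0, mem_filter]
                   exact Or.inr ⟨mem_univ u, huS, h⟩)
    refine ⟨⟨w u, hwuv⟩, (hTmem _).mpr (by
      simp only [hS', mem_union, mem_erase]
      exact Or.inl ⟨hwuv, (hw u huS).1⟩), fun x => ?_⟩
    constructor
    · rintro ⟨hadj, hx⟩
      rw [hTmem] at hx
      have hxS : (x : V) ∉ S := fun h => hx (by
        simp only [hS', mem_union, mem_erase]; exact Or.inl ⟨x.2, h⟩)
      have := ((hw u huS).2 x).mp ⟨(deleteVertex_adj G v _ x).mp hadj, hxS⟩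
      exact Subtype.ext this
    · rintro rfl
      refine ⟨(deleteVertex_adj G v _ _).mpr ((hw _ huS).2 _ |>.mpr rfl).1, fun hh => hu ((hTmem _).mp hh)⟩
  calc superDominationNumber (deleteVertex G v) ≤ T.card := sdn_le hsds
    _ = S'.card := hTcard
    _ ≤ _ := hS'card

lemma sdn_subtype_le {V : Type*} [Fintype V] [DecidableEq V] {v : V} (G' : SimpleGraph {x : V // x ≠ v})
    (S' : Finset V) (hS'v : ∀ x ∈ S', x ≠ v)
    (h : IsSuperDominatingSet G' (S'.subtype (· ≠ v))) :
    superDominationNumber G' ≤ S'.card := by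
  classical
  have := sdn_le h
  rwa [card_subtype, filter_true_of_mem hS'v] at this

lemma ncard_neighbor {V : Type*} [Fintype V] (G : SimpleGraph V) [DecidableRel G.Adj] (v : V) :
    (G.neighborSet v).ncard = (univ.filter (fun x => G.Adj v x)).card := by
  rw [Set.ncard_eq_toFinset_card']
  have : (G.neighborSet v).toFinset = univ.filter (fun x => G.Adj v x) := by
    ext x
    simp [Set.mem_toFinset, mem_neighborSet]
  rw [this]

lemma con_le_gamma {V : Type*} [Fintype V] (G : SimpleGraph V) (v : V)
    (hv : 2 ≤ (G.neighborSet v).ncard) :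
    superDominationNumber (contractVertex G v) + 1 ≤
      superDominationNumber G + (G.neighborSet v).ncard / 2 := by
  classical
  obtain ⟨S, hS, hScard⟩ := exists_min_sds G
  obtain ⟨w, hw⟩ := exists_witness_fun hS
  set Nv : Finset V := univ.filter (fun x => G.Adj v x) with hNv
  have hdeq : (G.neighborSet v).ncard = Nv.card := ncard_neighbor G v
  rw [hdeq] at hv ⊢
  have hd2 : 1 ≤ Nv.card / 2 := by omega
  by_cases hvS : v ∈ S
  · have hγpos : 1 ≤ S.card := card_pos.mpr ⟨v, hvS⟩
    by_cases hD0 : ∃ u0, u0 ∉ S ∧ w u0 = v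
    · -- v is the chosen witness of some u0
      obtain ⟨u0, hu0S, hwu0⟩ := hD0
      have hvpriv : ∀ x, (G.Adj v x ∧ x ∉ S) ↔ x = u0 := by
        intro x; rw [← hwu0]; exact (hw u0 hu0S).2 x
      set S' : Finset V := S.erase v ∪ {u0} with hS'
      have hu0v : u0 ≠ v := fun h => hu0S (h ▸ hvS)
      have hS'v : ∀ x ∈ S', x ≠ v := by
        intro x hx
        simp only [hS', mem_union, mem_erase, mem_singleton] at hx
        rcases hx with ⟨h, _⟩ | rfl
        · exact h
        · exact hu0v
      have hsds : IsSuperDominatingSet (contractVertex G v) (S'.subtype (· ≠ v)) := by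
        apply isSDS_of_witness
        rintro ⟨u, huv⟩ hu
        rw [mem_subtype] at hu
        simp only [hS', mem_union, mem_erase, mem_singleton, not_or, not_and] at hu
        obtain ⟨hu1, hu2⟩ := hu
        have huS : u ∉ S := fun h => (hu1 huv) h
        have huu0 : u ≠ u0 := hu2
        have hwuv : w u ≠ v := by
          intro h
          have hadj : G.Adj v u := by
            have h2 := ((hw u huS).2 u).mpr rfl
            rw [h] at h2
            exact h2.1
          exact huu0 ((hvpriv u).mp ⟨hadj, huS⟩)
        have hwuS' : w u ∈ S' := by
          simp only [hS', mem_union, mem_erase]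
          exact Or.inl ⟨hwuv, (hw u huS).1⟩
        refine ⟨⟨w u, hwuv⟩, mem_subtype.mpr hwuS', fun x => ?_⟩
        constructor
        · rintro ⟨hadj, hx⟩
          rw [mem_subtype] at hx
          have hxS' : (x : V) ∉ S' := hx
          have hxS : (x : V) ∉ S := by
            intro h
            exact hxS' (by simp only [hS', mem_union, mem_erase]; exact Or.inl ⟨x.2, h⟩)
          have hxu0 : (x : V) ≠ u0 := by
            intro h
            exact hxS' (by simp only [hS', mem_union, mem_singleton]; exact Or.inr h)
          obtain ⟨hne, hor⟩ := (contractVertex_adj G v _ x).mp hadj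
          rcases hor with h | h
          · exact Subtype.ext (((hw u huS).2 x).mp ⟨h, hxS⟩)
          · exact absurd ((hvpriv x).mp ⟨h.2, hxS⟩) hxu0
        · rintro rfl
          have hadj : G.Adj (w u) u := (((hw u huS).2 u).mpr rfl).1
          refine ⟨(contractVertex_adj G v _ _).mpr ⟨hadj.ne, Or.inl hadj⟩, ?_⟩
          rw [mem_subtype]
          simp only [hS', mem_union, mem_erase, mem_singleton, not_or]
          exact ⟨fun hc => huS hc.2, huu0⟩
      have hcard : S'.card ≤ S.card := by
        calc S'.card ≤ (S.erase v).card + 1 := by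
              refine (card_union_le _ _).trans ?_; simp
          _ = (S.card - 1) + 1 := by rw [card_erase_of_mem hvS]
          _ = S.card := by omega
      have := (sdn_subtype_le _ S' hS'v hsds).trans (hcard.trans_eq hScard)
      omega
    · -- no vertex uses v as its witness
      push_neg at hD0
      set P : Finset V := univ.filter (fun x => G.Adj v x ∧ x ∉ S) with hP
      set Bs : Finset V := univ.filter (fun u => u ∉ S ∧ G.Adj v (w u)) with hBs
      have hPB : P.card + Bs.card ≤ Nv.card := by
        have hinj : Set.InjOn w Bs := by
          intro a ha b hb hab
          simp only [hBs, mem_coe, mem_filter] at ha hb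
          have : G.Adj (w a) b := by
            rw [hab]; exact (((hw b hb.2.1).2 b).mpr rfl).1
          exact (((hw a ha.2.1).2 b).mp ⟨this, hb.2.1⟩).symm
        have himg : Bs.card = (Bs.image w).card := (card_image_of_injOn hinj).symm
        have hdisj : Disjoint P (Bs.image w) := by
          rw [Finset.disjoint_left]
          intro y hy hy'
          simp only [hP, mem_filter] at hy
          obtain ⟨u, hu, rfl⟩ := mem_image.mp hy'
          simp only [hBs, mem_filter] at hu
          exact hy.2.2 ((hw u hu.2.1).1)
        have hsub : P ∪ Bs.image w ⊆ Nv := by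
          intro y hy
          rcases mem_union.mp hy with hy | hy
          · simp only [hP, mem_filter] at hy
            simp only [hNv, mem_filter]
            exact ⟨mem_univ y, hy.2.1⟩
          · obtain ⟨u, hu, rfl⟩ := mem_image.mp hy
            simp only [hBs, mem_filter] at hu
            simp only [hNv, mem_filter]
            exact ⟨mem_univ _, hu.2.2⟩
        calc P.card + Bs.card = (P ∪ Bs.image w).card := by
              rw [card_union_of_disjoint hdisj, himg]
          _ ≤ Nv.card := card_le_card hsub
      set Drop : Finset V := if P.card ≤ Bs.card then P else Bs with hDrop
      have hDropv : ∀ x ∈ Drop, x ≠ v := by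
        intro x hx
        rw [hDrop] at hx
        split_ifs at hx
        · simp only [hP, mem_filter] at hx
          rintro rfl; exact hx.2.2 hvS
        · simp only [hBs, mem_filter] at hx
          rintro rfl; exact hx.2.1 hvS
      have hDropS : ∀ x ∈ Drop, x ∉ S := by
        intro x hx
        rw [hDrop] at hx
        split_ifs at hx
        · simp only [hP, mem_filter] at hx; exact hx.2.2
        · simp only [hBs, mem_filter] at hx; exact hx.2.1
      set S' : Finset V := S.erase v ∪ Drop with hS'
      have hS'v : ∀ x ∈ S', x ≠ v := by
        intro x hx
        rcases mem_union.mp hx with h | h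
        · exact (mem_erase.mp h).1
        · exact hDropv x h
      have hsds : IsSuperDominatingSet (contractVertex G v) (S'.subtype (· ≠ v)) := by
        apply isSDS_of_witness
        rintro ⟨u, huv⟩ hu
        rw [mem_subtype] at hu
        have huS : u ∉ S := fun h =>
          hu (mem_union_left _ (mem_erase.mpr ⟨huv, h⟩))
        have huDrop : u ∉ Drop := fun h => hu (mem_union_right _ h)
        have hwuv : w u ≠ v := fun h => hD0 u huS h
        have hwuS' : w u ∈ S' := mem_union_left _ (mem_erase.mpr ⟨hwuv, (hw u huS).1⟩)
        refine ⟨⟨w u, hwuv⟩, mem_subtype.mpr hwuS', fun x => ?_⟩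
        constructor
        · rintro ⟨hadj, hx⟩
          rw [mem_subtype] at hx
          have hxS : (x : V) ∉ S := fun h =>
            hx (mem_union_left _ (mem_erase.mpr ⟨x.2, h⟩))
          have hxDrop : (x : V) ∉ Drop := fun h => hx (mem_union_right _ h)
          obtain ⟨hne, hor⟩ := (contractVertex_adj G v _ x).mp hadj
          rcases hor with h | h
          · exact Subtype.ext (((hw u huS).2 x).mp ⟨h, hxS⟩)
          · exfalso
            have hxP : (x : V) ∈ P := by
              simp only [hP, mem_filter]; exact ⟨mem_univ _, h.2, hxS⟩
            have huBs : u ∈ Bs := by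
              simp only [hBs, mem_filter]; exact ⟨mem_univ _, huS, h.1⟩
            rw [hDrop] at huDrop hxDrop
            split_ifs at huDrop hxDrop
            · exact hxDrop hxP
            · exact huDrop huBs
        · rintro rfl
          have hadj : G.Adj (w u) u := (((hw u huS).2 u).mpr rfl).1
          refine ⟨(contractVertex_adj G v _ _).mpr ⟨hadj.ne, Or.inl hadj⟩, ?_⟩
          rw [mem_subtype]
          exact hu
      have hmin : Drop.card ≤ Nv.card / 2 := by
        rw [hDrop]
        split_ifs with h
        · omega
        · omega
      have hcard : S'.card ≤ (S.card - 1) + Nv.card / 2 := by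
        calc S'.card ≤ (S.erase v).card + Drop.card := card_union_le _ _
          _ ≤ (S.card - 1) + Nv.card / 2 := by
              rw [card_erase_of_mem hvS]; exact Nat.add_le_add_left hmin _
      have := (sdn_subtype_le _ S' hS'v hsds).trans hcard
      omega
  · -- v ∉ S
    have hS'v : ∀ x ∈ S, x ≠ v := fun x hx h => hvS (h ▸ hx)
    have hsds : IsSuperDominatingSet (contractVertex G v) (S.subtype (· ≠ v)) := by
      apply isSDS_of_witness
      rintro ⟨u, huv⟩ hu
      rw [mem_subtype] at hu
      have hwuv : w u ≠ v := fun h => hvS (h ▸ (hw u hu).1)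
      have hwnadj : ¬ G.Adj v (w u) := by
        intro hadj
        exact huv (((hw u hu).2 v).mp ⟨hadj.symm, hvS⟩).symm
      refine ⟨⟨w u, hwuv⟩, mem_subtype.mpr (hw u hu).1, fun x => ?_⟩
      constructor
      · rintro ⟨hadj, hx⟩
        rw [mem_subtype] at hx
        obtain ⟨hne, hor⟩ := (contractVertex_adj G v _ x).mp hadj
        rcases hor with h | h
        · exact Subtype.ext (((hw u hu).2 x).mp ⟨h, hx⟩)
        · exact absurd h.1 hwnadj
      · rintro rfl
        have hadj : G.Adj (w u) u := (((hw u hu).2 u).mpr rfl).1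
        exact ⟨(contractVertex_adj G v _ _).mpr ⟨hadj.ne, Or.inl hadj⟩,
          mem_subtype.not.mpr hu⟩
    have := (sdn_subtype_le _ S hS'v hsds).trans_eq hScard
    omega

/-- If `v` has degree at least `2` in `G`, then
`(γ_sp(G-v) + γ_sp(G/v) - ⌊deg(v)/2⌋ + 1)/2 ≤ γ_sp(G) ≤ (γ_sp(G-v) + γ_sp(G/v))/2 + 1`. -/
theorem stmt18 {V : Type*} [Fintype V] (G : SimpleGraph V) (v : V)
    (hv : 2 ≤ (G.neighborSet v).ncard) :
    ((superDominationNumber (deleteVertex G v) : ℝ) +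
        (superDominationNumber (contractVertex G v) : ℝ) -
        ((G.neighborSet v).ncard / 2 : ℕ) + 1) / 2 ≤
      (superDominationNumber G : ℝ) ∧
    (superDominationNumber G : ℝ) ≤
      ((superDominationNumber (deleteVertex G v) : ℝ) +
        (superDominationNumber (contractVertex G v) : ℝ)) / 2 + 1 := by
  have hA1 := gamma_le_del G v
  have hB1 := gamma_le_con G v
  have hA2 := del_le_gamma G v
  have hB2 := con_le_gamma G v hv
  set A := superDominationNumber (deleteVertex G v)
  set B := superDominationNumber (contractVertex G v)
  set g := superDominationNumber G
  set f := (G.neighborSet v).ncard / 2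
  have h1 : A + B + 1 ≤ 2 * g + f := by omega
  have h2 : 2 * g ≤ A + B + 2 := by omega
  constructor
  · have := (Nat.cast_le (α := ℝ)).mpr h1
    push_cast at this
    linarith
  · have := (Nat.cast_le (α := ℝ)).mpr h2
    push_cast at this
    linarith
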